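/- Let G be a finite connected simple graph and X a set of vertices of G. Then X is a general position set of G if and only if the connected components of the subgraph of G induced by X are cliques, and the vertex sets of these cliques form an in-transitive, distance-constant partition of X. -/
import Mathlib


open SimpleGraph

variable {V : Type*}

/-- `S` is a general position set of `G`: no three pairwise distinct vertices of `S`
lie on a common shortest path, i.e. no `v ∈ S` lies strictly between `u, w ∈ S`. -/
def IsGPSet (G : SimpleGraph V) (S : Set V) : Prop :=
  ∀ u ∈ S, ∀ v ∈ S, ∀ w ∈ S, u ≠ v → v ≠ w → u ≠ w →
    ¬(G.Reachable u w ∧ G.dist u v + G.dist v w = G.dist u w)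

/-- Every connected component of the subgraph of `G` induced by `X` is a clique. -/
def ComponentsAreCliques (G : SimpleGraph V) (X : Set V) : Prop :=
  ∀ u v : X, (G.induce X).Reachable u v → u = v ∨ G.Adj u v

/-- The partition of `X` into the vertex sets of the connected components of the
subgraph induced by `X` is distance-constant: the distance (in `G`) between two distinct
components does not depend on the choice of representatives. -/
def ComponentPartitionDistanceConstant (G : SimpleGraph V) (X : Set V) : Prop :=
  ∀ u v u' v' : X, (G.induce X).Reachable u u' → (G.induce X).Reachable v v' →
    ¬(G.induce X).Reachable u v → G.dist (u : V) v = G.dist (u' : V) v'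

/-- The partition of `X` into the vertex sets of the connected components of the
subgraph induced by `X` is in-transitive: for vertices of three pairwise distinct
components, the triangle inequality for distances in `G` is strict. -/
def ComponentPartitionInTransitive (G : SimpleGraph V) (X : Set V) : Prop :=
  ∀ u v w : X, ¬(G.induce X).Reachable u v → ¬(G.induce X).Reachable v w →
    ¬(G.induce X).Reachable u w →
    G.dist (u : V) w ≠ G.dist (u : V) v + G.dist (v : V) w

-- GP implies cliques
lemma gp_cliques {G : SimpleGraph V} {X : Set V} (hG : G.Connected)
    (hGP : IsGPSet G X) : ComponentsAreCliques G X := by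
  intro u v r
  by_contra h
  push_neg at h
  obtain ⟨hne, hnadj⟩ := h
  obtain ⟨w, hw⟩ := r.exists_walk_length_eq_dist
  set n := (G.induce X).dist u v with hn
  have hn0 : n ≠ 0 := fun h0 => hne (r.dist_eq_zero_iff.mp h0)
  have hn1 : n ≠ 1 := by
    intro h1
    have hadj : (G.induce X).Adj u v := dist_eq_one_iff_adj.mp h1
    exact hnadj hadj
  have hlen : w.length = n := hw
  -- n ≥ 2, destructure walk
  match w, hlen with
  | SimpleGraph.Walk.nil, hl => exact hn0 hl.symm
  | SimpleGraph.Walk.cons h1 SimpleGraph.Walk.nil, hl => exact hn1 hl.symm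
  | SimpleGraph.Walk.cons (v := x1) h1 (SimpleGraph.Walk.cons (v := x2) h2 w2), hl =>
    simp only [SimpleGraph.Walk.length_cons] at hl
    have hd2 : w2.length + 2 = n := by omega
    -- not adjacent u x2 in induce
    have hna : ¬ (G.induce X).Adj u x2 := by
      intro hadj
      have := SimpleGraph.dist_le (SimpleGraph.Walk.cons hadj w2)
      simp only [SimpleGraph.Walk.length_cons] at this
      omega
    have hneq : u ≠ x2 := by
      rintro rfl
      have := SimpleGraph.dist_le w2
      omega
    -- move to G
    have a1 : G.Adj (u : V) (x1 : V) := h1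
    have a2 : G.Adj (x1 : V) (x2 : V) := h2
    have hnaG : ¬ G.Adj (u : V) (x2 : V) := fun hg => hna hg
    have hneqV : (u : V) ≠ (x2 : V) := fun he => hneq (Subtype.ext he)
    have d1 : G.dist (u : V) x1 = 1 := dist_eq_one_iff_adj.mpr a1
    have d2 : G.dist (x1 : V) x2 = 1 := dist_eq_one_iff_adj.mpr a2
    have dle : G.dist (u : V) x2 ≤ 2 := by
      have := hG.dist_triangle (u := (u:V)) (v := (x1:V)) (w := (x2:V))
      omega
    have dne0 : G.dist (u : V) x2 ≠ 0 := fun h0 => hneqV (hG.dist_eq_zero_iff.mp h0)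
    have dne1 : G.dist (u : V) x2 ≠ 1 := fun h0 => hnaG (dist_eq_one_iff_adj.mp h0)
    have deq : G.dist (u : V) x2 = 2 := by omega
    exact hGP u u.2 x1 x1.2 x2 x2.2 (fun he => a1.ne (he)) (fun he => a2.ne he) hneqV
      ⟨hG.preconnected _ _, by omega⟩

-- adjacent vertices of X are equidistant from a third
lemma gp_adj_dist {G : SimpleGraph V} {X : Set V} (hG : G.Connected)
    (hGP : IsGPSet G X) (a b c : X) (hab : G.Adj (a : V) b)
    (hac : (a : V) ≠ c) (hbc : (b : V) ≠ c) :
    G.dist (a : V) c = G.dist (b : V) c := by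
  have dab : G.dist (a : V) b = 1 := dist_eq_one_iff_adj.mpr hab
  have dba : G.dist (b : V) a = 1 := dist_eq_one_iff_adj.mpr hab.symm
  have t1 : G.dist (a : V) c ≤ G.dist (a : V) b + G.dist (b : V) c := hG.dist_triangle
  have t2 : G.dist (b : V) c ≤ G.dist (b : V) a + G.dist (a : V) c := hG.dist_triangle
  rcases lt_trichotomy (G.dist (a : V) c) (G.dist (b : V) c) with h | h | h
  · exfalso
    refine hGP b b.2 a a.2 c c.2 (fun he => hab.ne he.symm) hac hbc
      ⟨hG.preconnected _ _, by omega⟩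
  · exact h
  · exfalso
    refine hGP a a.2 b b.2 c c.2 (fun he => hab.ne he) hbc hac
      ⟨hG.preconnected _ _, by omega⟩

theorem isGPSet_iff_cliques_in_transitive_distance_constant
    [Fintype V] (G : SimpleGraph V) (hG : G.Connected) (X : Set V) :
    IsGPSet G X ↔
      ComponentsAreCliques G X ∧ ComponentPartitionDistanceConstant G X ∧
        ComponentPartitionInTransitive G X := by
  constructor
  · intro hGP
    have hC := gp_cliques hG hGP
    refine ⟨hC, ?_, ?_⟩
    · intro u v u' v' ruu' rvv' nruv
      -- first change u to u'
      have nru'v : ¬(G.induce X).Reachable u' v := fun h => nruv (ruu'.trans h)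
      have nru'v' : ¬(G.induce X).Reachable u' v' := fun h => nruv (ruu'.trans (h.trans rvv'.symm))
      have huv : (u : V) ≠ v := fun he => nruv (by rw [Subtype.ext he])
      have hu'v : (u' : V) ≠ v := fun he => nru'v (by rw [Subtype.ext he])
      have hu'v' : (u' : V) ≠ v' := fun he => nru'v' (by rw [Subtype.ext he])
      have hvu' : (v : V) ≠ u' := fun he => nru'v (by rw [Subtype.ext he])
      have hv'u' : (v' : V) ≠ u' := fun he => nru'v' (by rw [Subtype.ext he])
      have step1 : G.dist (u : V) v = G.dist (u' : V) v := by
        rcases hC u u' ruu' with rfl | hadj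
        · rfl
        · exact gp_adj_dist hG hGP u u' v hadj huv hu'v
      have step2 : G.dist (v : V) u' = G.dist (v' : V) u' := by
        rcases hC v v' rvv' with rfl | hadj
        · rfl
        · exact gp_adj_dist hG hGP v v' u' hadj hvu' hv'u'
      rw [step1, SimpleGraph.dist_comm (u := (u':V)) (v := (v:V)), step2, SimpleGraph.dist_comm (u := (v':V)) (v := (u':V))]
    · intro u v w nruv nrvw nruw
      have huv : (u : V) ≠ v := fun he => nruv (by rw [Subtype.ext he])
      have hvw : (v : V) ≠ w := fun he => nrvw (by rw [Subtype.ext he])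
      have huw : (u : V) ≠ w := fun he => nruw (by rw [Subtype.ext he])
      intro heq
      exact hGP u u.2 v v.2 w w.2 huv hvw huw ⟨hG.preconnected _ _, heq.symm⟩
  · rintro ⟨hC, hD, hI⟩
    intro u hu v hv w hw huv hvw huw ⟨hr, heq⟩
    set u' : X := ⟨u, hu⟩
    set v' : X := ⟨v, hv⟩
    set w' : X := ⟨w, hw⟩
    have hne_uv : u' ≠ v' := fun h => huv (congrArg Subtype.val h)
    have hne_vw : v' ≠ w' := fun h => hvw (congrArg Subtype.val h)
    have hne_uw : u' ≠ w' := fun h => huw (congrArg Subtype.val h)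
    by_cases ruv : (G.induce X).Reachable u' v'
    · by_cases rvw : (G.induce X).Reachable v' w'
      · -- all same component: pairwise adjacent
        have ruw : (G.induce X).Reachable u' w' := ruv.trans rvw
        have a1 : G.Adj u v := (hC u' v' ruv).resolve_left hne_uv
        have a2 : G.Adj v w := (hC v' w' rvw).resolve_left hne_vw
        have a3 : G.Adj u w := (hC u' w' ruw).resolve_left hne_uw
        rw [dist_eq_one_iff_adj.mpr a1, dist_eq_one_iff_adj.mpr a2,
          dist_eq_one_iff_adj.mpr a3] at heq
        omega
      · -- u,v same; w other
        have nruw : ¬(G.induce X).Reachable u' w' := fun h => rvw (ruv.symm.trans h)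
        have a1 : G.Adj u v := (hC u' v' ruv).resolve_left hne_uv
        have h1 : G.dist u w = G.dist v w := hD u' w' v' w' ruv (Reachable.refl _) nruw
        rw [dist_eq_one_iff_adj.mpr a1] at heq
        omega
    · by_cases rvw : (G.induce X).Reachable v' w'
      · have nruw : ¬(G.induce X).Reachable u' w' := fun h => ruv (h.trans rvw.symm)
        have a2 : G.Adj v w := (hC v' w' rvw).resolve_left hne_vw
        have h1 : G.dist u v = G.dist u w := hD u' v' u' w' (Reachable.refl _) rvw ruv
        rw [dist_eq_one_iff_adj.mpr a2] at heq
        omega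
      · by_cases ruw : (G.induce X).Reachable u' w'
        · have a3 : G.Adj u w := (hC u' w' ruw).resolve_left hne_uw
          have h1 : G.dist u v = G.dist w v := hD u' v' w' v' ruw (Reachable.refl _) ruv
          have hpos : G.dist u v ≠ 0 := fun h0 => huv (hG.dist_eq_zero_iff.mp h0)
          rw [dist_eq_one_iff_adj.mpr a3] at heq
          rw [SimpleGraph.dist_comm (u := v) (v := w), ← h1] at heq
          omega
        · exact hI u' v' w' ruv rvw ruw heq.symm
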